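/- Let X1, X2, X3 be iid St. Petersburg lotteries. Then P((X1 + X2 + X3)/3 < 8) = 195/256 > 3/4 = P(X1 < 8); consequently X1 ≤_st (X1+X2+X3)/3 fails. -/

import Mathlib

open MeasureTheory ProbabilityTheory Real Finset

noncomputable section

variable {Ω : Type*} [MeasurableSpace Ω]

/-- `X ~ Pareto(α)` : cdf `1 - x^(-α)` for `x ≥ 1`. -/
def IsPareto (P : Measure Ω) (α : ℝ) (X : Ω → ℝ) : Prop :=
  Measurable X ∧ (∀ x : ℝ, 1 ≤ x → P {ω | x < X ω} = ENNReal.ofReal (x ^ (-α))) ∧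
    P {ω | X ω < 1} = 0

/-- the increasing rearrangement of a vector -/
def sortedVec {n : ℕ} (f : Fin n → ℝ) : Fin n → ℝ := f ∘ Tuple.sort f

/-- `MajorizedBy θ η` : `θ ⪯ η`, i.e. equal sums and the sum of the `k` smallest
components of `θ` is at least that of `η` for each `k`. -/
def MajorizedBy {n : ℕ} (θ η : Fin n → ℝ) : Prop :=
  (∑ i, θ i = ∑ i, η i) ∧
  ∀ k : ℕ, k ≤ n →
    ∑ i ∈ Finset.univ.filter (fun i : Fin n => (i : ℕ) < k), sortedVec η i ≤
    ∑ i ∈ Finset.univ.filter (fun i : Fin n => (i : ℕ) < k), sortedVec θ i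

/-- St. Petersburg lottery: takes value `2^k` with probability `2^(-k)` for `k ≥ 1`. -/
def IsStPetersburg (P : Measure Ω) (X : Ω → ℝ) : Prop :=
  Measurable X ∧ ∀ k : ℕ, 1 ≤ k → P {ω | X ω = 2 ^ k} = ((2 : ENNReal) ^ k)⁻¹

open scoped ENNReal

/-! ### Auxiliary material -/

/-- The finite set of exponent triples giving a sum `< 24`. -/
def StPT : Finset (ℕ × ℕ × ℕ) :=
  ((Finset.Icc 1 4) ×ˢ ((Finset.Icc 1 4) ×ˢ (Finset.Icc 1 4))).filter
    (fun t => 2 ^ t.1 + 2 ^ t.2.1 + 2 ^ t.2.2 < 24)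

lemma StPT_natsum : ∑ t ∈ StPT, 2 ^ (12 - (t.1 + t.2.1 + t.2.2)) = 3120 := by decide

lemma StPT_realsum :
    ∑ t ∈ StPT, (((2:ℝ) ^ t.1)⁻¹ * ((2:ℝ) ^ t.2.1)⁻¹ * ((2:ℝ) ^ t.2.2)⁻¹) = 195 / 256 := by
  have h : ∀ t ∈ StPT, (((2:ℝ) ^ t.1)⁻¹ * ((2:ℝ) ^ t.2.1)⁻¹ * ((2:ℝ) ^ t.2.2)⁻¹)
      = ((2 ^ (12 - (t.1 + t.2.1 + t.2.2)) : ℕ) : ℝ) / 4096 := by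
    rintro ⟨a, b, c⟩ ht
    simp only [StPT, Finset.mem_filter, Finset.mem_product, Finset.mem_Icc] at ht
    obtain ⟨⟨⟨ha1, ha4⟩, ⟨hb1, hb4⟩, ⟨hc1, hc4⟩⟩, -⟩ := ht
    have h212 : (4096:ℝ) = 2 ^ (a + b + c) * 2 ^ (12 - (a + b + c)) := by
      rw [← pow_add, show (a + b + c) + (12 - (a + b + c)) = 12 by omega]; norm_num
    push_cast
    rw [← mul_inv, ← mul_inv, ← pow_add, ← pow_add, h212]
    rw [eq_div_iff (by positivity)]
    field_simp
  rw [Finset.sum_congr rfl h, ← Finset.sum_div, ← Nat.cast_sum, StPT_natsum]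
  norm_num

lemma pow_two_real_inj {i j : ℕ} (h : (2:ℝ) ^ i = 2 ^ j) : i = j := by
  have : ((2 ^ i : ℕ) : ℝ) = ((2 ^ j : ℕ) : ℝ) := by push_cast; exact h
  exact Nat.pow_right_injective le_rfl (Nat.cast_injective this)

lemma stp_conull {P : Measure Ω} [IsProbabilityMeasure P] {X : Ω → ℝ}
    (h : IsStPetersburg P X) : P (⋃ k : ℕ, {ω | X ω = 2 ^ (k + 1)}) = 1 := by
  have hm : ∀ k : ℕ, MeasurableSet {ω | X ω = 2 ^ (k + 1)} := fun k =>
    h.1 (measurableSet_singleton _)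
  have hd : Pairwise (Function.onFun Disjoint fun k : ℕ => {ω | X ω = 2 ^ (k + 1)}) := by
    intro i j hij
    refine Set.disjoint_left.2 fun ω hi hj => hij ?_
    have : (2:ℝ) ^ (i+1) = 2 ^ (j+1) := hi.symm.trans hj
    have := pow_two_real_inj this
    omega
  rw [measure_iUnion hd hm]
  have : ∀ k : ℕ, P {ω | X ω = 2 ^ (k + 1)} = (2⁻¹ : ℝ≥0∞) ^ (k + 1) := by
    intro k
    rw [h.2 (k+1) (by omega), ← ENNReal.inv_pow]
  simp_rw [this]
  rw [ENNReal.tsum_geometric_add_one, ENNReal.one_sub_inv_two]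
  rw [inv_inv]
  exact ENNReal.inv_mul_cancel (by norm_num : (2:ℝ≥0∞) ≠ 0) (by norm_num : (2:ℝ≥0∞) ≠ ⊤)

lemma stp_compl_null {P : Measure Ω} [IsProbabilityMeasure P] {X : Ω → ℝ}
    (h : IsStPetersburg P X) : P (⋃ k : ℕ, {ω | X ω = 2 ^ (k + 1)})ᶜ = 0 := by
  have hmu : MeasurableSet (⋃ k : ℕ, {ω | X ω = 2 ^ (k + 1)}) :=
    MeasurableSet.iUnion fun k => h.1 (measurableSet_singleton _)
  rw [measure_compl hmu (measure_ne_top _ _), stp_conull h, measure_univ, tsub_self]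

lemma indep_triple {P : Measure Ω} {X₁ X₂ X₃ : Ω → ℝ}
    (hind : iIndepFun ![X₁, X₂, X₃] P)
    (s₁ s₂ s₃ : Set ℝ) (m1 : MeasurableSet s₁) (m2 : MeasurableSet s₂) (m3 : MeasurableSet s₃) :
    P (X₁ ⁻¹' s₁ ∩ X₂ ⁻¹' s₂ ∩ X₃ ⁻¹' s₃) = P (X₁ ⁻¹' s₁) * P (X₂ ⁻¹' s₂) * P (X₃ ⁻¹' s₃) := by
  have key := hind.meas_iInter (s := fun i => (![X₁, X₂, X₃] i) ⁻¹' (![s₁, s₂, s₃] i))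
    (fun i => ⟨![s₁, s₂, s₃] i, by fin_cases i <;> assumption, rfl⟩)
  have hset : (⋂ i, (![X₁, X₂, X₃] i) ⁻¹' (![s₁, s₂, s₃] i))
      = X₁ ⁻¹' s₁ ∩ X₂ ⁻¹' s₂ ∩ X₃ ⁻¹' s₃ := by
    ext ω
    simp [Set.mem_iInter, Fin.forall_fin_succ, and_assoc]
  rw [hset, Fin.prod_univ_three] at key
  simpa using key

lemma ennreal_inv_pow_ofReal (n : ℕ) :
    ((2:ℝ≥0∞) ^ n)⁻¹ = ENNReal.ofReal (((2:ℝ) ^ n)⁻¹) := by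
  rw [ENNReal.ofReal_inv_of_pos (by positivity), ENNReal.ofReal_pow (by norm_num)]
  norm_num

lemma ennreal_195_256 : ENNReal.ofReal ((195:ℝ) / 256) = 195 / 256 := by
  rw [← ENNReal.toReal_eq_toReal_iff' ENNReal.ofReal_ne_top
    (ENNReal.div_lt_top (by norm_num) (by norm_num)).ne]
  rw [ENNReal.toReal_ofReal (by norm_num)]
  simp [ENNReal.toReal_div]

lemma ennreal_three_quarters : (2:ℝ≥0∞)⁻¹ + 4⁻¹ = 3 / 4 := by
  rw [← ENNReal.toReal_eq_toReal_iff' (by finiteness)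
    (ENNReal.div_lt_top (by norm_num) (by norm_num)).ne]
  rw [ENNReal.toReal_add (by finiteness) (by finiteness)]
  simp [ENNReal.toReal_div]
  norm_num

lemma ennreal_not_le : ¬ ((195:ℝ≥0∞) / 256 ≤ 3 / 4) := by
  rw [← ENNReal.toReal_le_toReal (ENNReal.div_lt_top (by norm_num) (by norm_num)).ne
    (ENNReal.div_lt_top (by norm_num) (by norm_num)).ne]
  simp [ENNReal.toReal_div]
  norm_num

theorem stmt_10 (P : Measure Ω) [IsProbabilityMeasure P]
    (X₁ X₂ X₃ : Ω → ℝ)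
    (h₁ : IsStPetersburg P X₁) (h₂ : IsStPetersburg P X₂) (h₃ : IsStPetersburg P X₃)
    (hind : iIndepFun ![X₁, X₂, X₃] P) :
    P {ω | (X₁ ω + X₂ ω + X₃ ω) / 3 < 8} = 195 / 256 ∧
    P {ω | X₁ ω < 8} = 3 / 4 ∧
    ¬ (∀ x : ℝ, P {ω | (X₁ ω + X₂ ω + X₃ ω) / 3 ≤ x} ≤ P {ω | X₁ ω ≤ x}) := by
  -- the almost sure sets
  set A₁ : Set Ω := ⋃ k : ℕ, {ω | X₁ ω = 2 ^ (k + 1)} with hA₁def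
  set A₂ : Set Ω := ⋃ k : ℕ, {ω | X₂ ω = 2 ^ (k + 1)} with hA₂def
  set A₃ : Set Ω := ⋃ k : ℕ, {ω | X₃ ω = 2 ^ (k + 1)} with hA₃def
  have hGnull : P (A₁ ∩ (A₂ ∩ A₃))ᶜ = 0 := by
    rw [Set.compl_inter, Set.compl_inter]
    exact measure_union_null (stp_compl_null h₁)
      (measure_union_null (stp_compl_null h₂) (stp_compl_null h₃))
  -- the elementary events
  set E : ℕ × ℕ × ℕ → Set Ω := fun t =>
    X₁ ⁻¹' {(2:ℝ) ^ t.1} ∩ X₂ ⁻¹' {(2:ℝ) ^ t.2.1} ∩ X₃ ⁻¹' {(2:ℝ) ^ t.2.2} with hEdef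
  have hEmem : ∀ t (ω : Ω), ω ∈ E t ↔
      (X₁ ω = 2 ^ t.1 ∧ X₂ ω = 2 ^ t.2.1 ∧ X₃ ω = 2 ^ t.2.2) := by
    intro t ω; simp [hEdef, and_assoc]
  -- the key set identity
  have hsetEq : {ω | X₁ ω + X₂ ω + X₃ ω < 24} ∩ (A₁ ∩ (A₂ ∩ A₃)) = ⋃ t ∈ StPT, E t := by
    ext ω
    simp only [Set.mem_inter_iff, Set.mem_setOf_eq, hA₁def, hA₂def, hA₃def, Set.mem_iUnion,
      Set.mem_setOf_eq, exists_prop]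
    constructor
    · rintro ⟨hlt, ⟨k₁, hk₁⟩, ⟨k₂, hk₂⟩, ⟨k₃, hk₃⟩⟩
      rw [hk₁, hk₂, hk₃] at hlt
      have hnat : 2 ^ (k₁+1) + 2 ^ (k₂+1) + 2 ^ (k₃+1) < 24 := by exact_mod_cast hlt
      have hb1 : (2:ℕ) ≤ 2 ^ (k₁+1) := Nat.one_lt_two_pow (by omega)
      have hb2 : (2:ℕ) ≤ 2 ^ (k₂+1) := Nat.one_lt_two_pow (by omega)
      have hb3 : (2:ℕ) ≤ 2 ^ (k₃+1) := Nat.one_lt_two_pow (by omega)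
      have hle : ∀ k : ℕ, (2:ℕ) ^ k < 32 → k ≤ 4 := by
        intro k hk
        by_contra hk'
        have : (2:ℕ) ^ 5 ≤ 2 ^ k := Nat.pow_le_pow_right (by norm_num) (by omega)
        omega
      refine ⟨(k₁+1, k₂+1, k₃+1), ?_, ?_⟩
      · simp only [StPT, Finset.mem_filter, Finset.mem_product, Finset.mem_Icc]
        exact ⟨⟨⟨by omega, hle _ (by omega)⟩, ⟨by omega, hle _ (by omega)⟩,
          ⟨by omega, hle _ (by omega)⟩⟩, hnat⟩
      · exact (hEmem _ ω).2 ⟨hk₁, hk₂, hk₃⟩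
    · rintro ⟨t, htT, htE⟩
      obtain ⟨hX1, hX2, hX3⟩ := (hEmem t ω).1 htE
      simp only [StPT, Finset.mem_filter, Finset.mem_product, Finset.mem_Icc] at htT
      obtain ⟨⟨⟨ha1, -⟩, ⟨hb1, -⟩, ⟨hc1, -⟩⟩, hlt⟩ := htT
      refine ⟨?_, ⟨t.1 - 1, ?_⟩, ⟨t.2.1 - 1, ?_⟩, ⟨t.2.2 - 1, ?_⟩⟩
      · rw [hX1, hX2, hX3]
        exact_mod_cast (by exact_mod_cast hlt :
          ((2 ^ t.1 + 2 ^ t.2.1 + 2 ^ t.2.2 : ℕ) : ℝ) < 24)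
      · rw [hX1]; congr 1; omega
      · rw [hX2]; congr 1; omega
      · rw [hX3]; congr 1; omega
  -- pairwise disjointness and measurability
  have hEmeas : ∀ t : ℕ × ℕ × ℕ, MeasurableSet (E t) := fun t =>
    ((h₁.1 (measurableSet_singleton _)).inter (h₂.1 (measurableSet_singleton _))).inter
      (h₃.1 (measurableSet_singleton _))
  have hEdisj : (StPT : Set (ℕ × ℕ × ℕ)).PairwiseDisjoint E := by
    intro t _ t' _ hne
    refine Set.disjoint_left.2 fun ω hω hω' => hne ?_
    obtain ⟨e1, e2, e3⟩ := (hEmem t ω).1 hω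
    obtain ⟨f1, f2, f3⟩ := (hEmem t' ω).1 hω'
    have g1 := pow_two_real_inj (e1.symm.trans f1)
    have g2 := pow_two_real_inj (e2.symm.trans f2)
    have g3 := pow_two_real_inj (e3.symm.trans f3)
    exact Prod.ext g1 (Prod.ext g2 g3)
  -- the probability of each elementary event
  have hEprob : ∀ t ∈ StPT, P (E t) =
      ENNReal.ofReal (((2:ℝ) ^ t.1)⁻¹ * ((2:ℝ) ^ t.2.1)⁻¹ * ((2:ℝ) ^ t.2.2)⁻¹) := by
    intro t htT
    simp only [StPT, Finset.mem_filter, Finset.mem_product, Finset.mem_Icc] at htT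
    obtain ⟨⟨⟨ha1, -⟩, ⟨hb1, -⟩, ⟨hc1, -⟩⟩, -⟩ := htT
    rw [hEdef]
    rw [indep_triple hind _ _ _ (measurableSet_singleton _) (measurableSet_singleton _)
      (measurableSet_singleton _)]
    have e1 : P (X₁ ⁻¹' {(2:ℝ) ^ t.1}) = ((2:ℝ≥0∞) ^ t.1)⁻¹ := h₁.2 t.1 ha1
    have e2 : P (X₂ ⁻¹' {(2:ℝ) ^ t.2.1}) = ((2:ℝ≥0∞) ^ t.2.1)⁻¹ := h₂.2 t.2.1 hb1
    have e3 : P (X₃ ⁻¹' {(2:ℝ) ^ t.2.2}) = ((2:ℝ≥0∞) ^ t.2.2)⁻¹ := h₃.2 t.2.2 hc1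
    rw [e1, e2, e3, ennreal_inv_pow_ofReal, ennreal_inv_pow_ofReal, ennreal_inv_pow_ofReal,
      ← ENNReal.ofReal_mul (by positivity), ← ENNReal.ofReal_mul (by positivity)]
  -- the key probability computation
  have key : P ({ω | X₁ ω + X₂ ω + X₃ ω < 24} ∩ (A₁ ∩ (A₂ ∩ A₃))) = 195 / 256 := by
    rw [hsetEq, measure_biUnion_finset hEdisj (fun t _ => hEmeas t),
      Finset.sum_congr rfl hEprob,
      ← ENNReal.ofReal_sum_of_nonneg (fun t _ => by positivity), StPT_realsum,
      ennreal_195_256]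
  have hmean : {ω | (X₁ ω + X₂ ω + X₃ ω) / 3 < 8} = {ω | X₁ ω + X₂ ω + X₃ ω < 24} := by
    ext ω
    rw [Set.mem_setOf_eq, Set.mem_setOf_eq, div_lt_iff₀ (by norm_num)]
    norm_num
  have part1 : P {ω | (X₁ ω + X₂ ω + X₃ ω) / 3 < 8} = 195 / 256 := by
    rw [hmean, ← measure_inter_conull hGnull, key]
  -- second part
  have hset2 : {ω | X₁ ω < 8} ∩ A₁ = {ω | X₁ ω = 2 ^ (0 + 1)} ∪ {ω | X₁ ω = 2 ^ (1 + 1)} := by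
    ext ω
    simp only [Set.mem_inter_iff, Set.mem_setOf_eq, hA₁def, Set.mem_iUnion, Set.mem_setOf_eq,
      Set.mem_union]
    constructor
    · rintro ⟨hlt, k, hk⟩
      rw [hk] at hlt
      have hnat : (2:ℕ) ^ (k + 1) < 8 := by exact_mod_cast hlt
      have hk2 : k + 1 < 3 := by
        by_contra hk'
        have : (2:ℕ) ^ 3 ≤ 2 ^ (k+1) := Nat.pow_le_pow_right (by norm_num) (by omega)
        omega
      rcases (by omega : k = 0 ∨ k = 1) with rfl | rfl
      · exact Or.inl hk
      · exact Or.inr hk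
    · rintro (hk | hk)
      · exact ⟨by rw [hk]; norm_num, 0, hk⟩
      · exact ⟨by rw [hk]; norm_num, 1, hk⟩
  have part2 : P {ω | X₁ ω < 8} = 3 / 4 := by
    rw [← measure_inter_conull (stp_compl_null h₁), hset2,
      measure_union ?_ (show MeasurableSet {ω | X₁ ω = 2 ^ (1 + 1)} from
        h₁.1 (measurableSet_singleton _))]
    · have e1 : P {ω | X₁ ω = 2 ^ (0 + 1)} = ((2:ℝ≥0∞) ^ 1)⁻¹ := h₁.2 1 le_rfl
      have e2 : P {ω | X₁ ω = 2 ^ (1 + 1)} = ((2:ℝ≥0∞) ^ 2)⁻¹ := h₁.2 2 (by norm_num)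
      rw [e1, e2, pow_one, show ((2:ℝ≥0∞) ^ 2)⁻¹ = 4⁻¹ by norm_num]
      exact ennreal_three_quarters
    · refine Set.disjoint_left.2 fun ω hω hω' => ?_
      have := pow_two_real_inj ((Set.mem_setOf_eq ▸ hω).symm.trans (Set.mem_setOf_eq ▸ hω'))
      omega
  refine ⟨part1, part2, ?_⟩
  -- third part
  intro hc
  have h23 := hc (23 / 3)
  have hup : P {ω | X₁ ω ≤ 23 / 3} ≤ 3 / 4 := by
    rw [← part2]
    exact measure_mono fun ω hω =>
      show X₁ ω < 8 from lt_of_le_of_lt hω (by norm_num : (23:ℝ)/3 < 8)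
  have hlow : (195:ℝ≥0∞) / 256 ≤ P {ω | (X₁ ω + X₂ ω + X₃ ω) / 3 ≤ 23 / 3} := by
    rw [← key]
    apply measure_mono
    rintro ω ⟨hlt, hG⟩
    obtain ⟨⟨k₁, hk₁⟩, ⟨k₂, hk₂⟩, ⟨k₃, hk₃⟩⟩ :
        (∃ k : ℕ, X₁ ω = 2 ^ (k+1)) ∧ (∃ k : ℕ, X₂ ω = 2 ^ (k+1)) ∧
        (∃ k : ℕ, X₃ ω = 2 ^ (k+1)) := by
      simpa [hA₁def, hA₂def, hA₃def, Set.mem_iUnion] using hG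
    have hsum : X₁ ω + X₂ ω + X₃ ω < 24 := hlt
    rw [hk₁, hk₂, hk₃] at hsum
    have hnat : 2 ^ (k₁+1) + 2 ^ (k₂+1) + 2 ^ (k₃+1) < 24 := by exact_mod_cast hsum
    have hle : (2:ℝ) ^ (k₁+1) + 2 ^ (k₂+1) + 2 ^ (k₃+1) ≤ 23 := by
      exact_mod_cast (by omega : (2:ℕ) ^ (k₁+1) + 2 ^ (k₂+1) + 2 ^ (k₃+1) ≤ 23)
    show (X₁ ω + X₂ ω + X₃ ω) / 3 ≤ 23 / 3
    rw [hk₁, hk₂, hk₃, div_le_div_iff₀ (by norm_num) (by norm_num)]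
    linarith
  exact ennreal_not_le (hlow.trans (h23.trans hup))

end
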